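/- The maximal weight function ρ₁ of a C-sequence is coherent: for all α < β < ω₁, the set {ξ < α : ρ₁(ξ, α) ≠ ρ₁(ξ, β)} is finite. -/

import Mathlib

open Ordinal Set

/-- The first uncountable ordinal. -/
noncomputable def omega1 : Ordinal := (Cardinal.aleph 1).ord

/-- `C` is a C-sequence: `C (α+1) = {α}` and, for nonzero countable limit `α`,
`C α` is a cofinal subset of `α` of order type `ω` (equivalently: infinite with
all proper initial segments finite). -/
def IsCSeq (C : Ordinal → Set Ordinal) : Prop :=
  (∀ α : Ordinal, C (α + 1) = {α}) ∧
  ∀ α : Ordinal, α < omega1 → Order.IsSuccLimit α →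
    C α ⊆ Set.Iio α ∧ (∀ β < α, ∃ γ ∈ C α, β ≤ γ) ∧ (C α).Infinite ∧
      ∀ β < α, (C α ∩ Set.Iio β).Finite

/-- `L` satisfies the defining recursion of the lower trace of the minimal walk:
`L(α,α) = ∅` and, for `α < β`,
`L(α,β) = (L(α, min(C_β \ α)) ∪ {max(C_β ∩ α)}) \ max(C_β ∩ α)`
(where the subtraction removes all ordinals below `max(C_β ∩ α)`). -/
def LowerTraceEqns (C : Ordinal → Set Ordinal) (L : Ordinal → Ordinal → Finset Ordinal) :
    Prop :=
  (∀ α : Ordinal, L α α = ∅) ∧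
  (∀ α β : Ordinal, α < β → (C β ∩ Set.Iio α).Nonempty →
    (L α β : Set Ordinal) =
      {ξ ∈ (L α (sInf (C β \ Set.Iio α)) : Set Ordinal) ∪ {sSup (C β ∩ Set.Iio α)} |
        sSup (C β ∩ Set.Iio α) ≤ ξ}) ∧
  (∀ α β : Ordinal, α < β → C β ∩ Set.Iio α = ∅ →
    L α β = L α (sInf (C β \ Set.Iio α)))

/-- `ρ` satisfies the defining recursion of the maximal weight `ρ₁`:
`ρ₁(α,α) = 0` and `ρ₁(α,β) = max(|C_β ∩ α|, ρ₁(α, min(C_β \ α)))` for `α < β`. -/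
def Rho1Eqns (C : Ordinal → Set Ordinal) (ρ : Ordinal → Ordinal → ℕ) : Prop :=
  (∀ α : Ordinal, ρ α α = 0) ∧
  ∀ α β : Ordinal, α < β →
    ρ α β = max (C β ∩ Set.Iio α).ncard (ρ α (sInf (C β \ Set.Iio α)))

section Aux

variable {C : Ordinal → Set Ordinal} {ρ : Ordinal → Ordinal → ℕ}

/-- ρ is unchanged by passing from a successor to its predecessor. -/
lemma rho_succ_aux (hC : IsCSeq C) (hρ : Rho1Eqns C ρ) {ξ γ : Ordinal} (h : ξ ≤ γ) :
    ρ ξ (γ + 1) = ρ ξ γ := by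
  have h1 : ξ < γ + 1 := lt_of_le_of_lt h (lt_add_one γ)
  have hrec := hρ.2 ξ (γ + 1) h1
  rw [hC.1 γ] at hrec
  have e1 : ({γ} : Set Ordinal) ∩ Set.Iio ξ = ∅ := by
    ext x; simp only [Set.mem_inter_iff, Set.mem_singleton_iff, Set.mem_Iio,
      Set.mem_empty_iff_false, iff_false, not_and]
    rintro rfl; exact not_lt.2 h
  have e2 : ({γ} : Set Ordinal) \ Set.Iio ξ = {γ} := by
    ext x; simp only [Set.mem_diff, Set.mem_singleton_iff, Set.mem_Iio, and_iff_left_iff_imp]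
    rintro rfl; exact not_lt.2 h
  rw [e1, e2, csInf_singleton] at hrec
  rw [hrec, Set.ncard_empty, Nat.zero_max]

/-- Lemma A: each vertical section of ρ₁ is finite-to-one below any `n`. -/
lemma rho_fib_finite (hC : IsCSeq C) (hρ : Rho1Eqns C ρ) :
    ∀ β : Ordinal, β < omega1 → ∀ n : ℕ, {ξ : Ordinal | ξ < β ∧ ρ ξ β ≤ n}.Finite := by
  intro β
  induction β using Ordinal.induction with
  | h β ih =>
  intro hβ n
  rcases Ordinal.zero_or_succ_or_isSuccLimit β with rfl | ⟨γ, rfl⟩ | hlim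
  · exact Set.Finite.subset (Set.finite_empty)
      (fun ξ hξ => absurd hξ.1 (not_lt_zero (a := ξ)))
  · rw [← Ordinal.add_one_eq_succ] at *
    have hγ : γ < omega1 := lt_trans (lt_add_one γ) hβ
    have hsubset : {ξ : Ordinal | ξ < γ + 1 ∧ ρ ξ (γ + 1) ≤ n} ⊆
        insert γ {ξ : Ordinal | ξ < γ ∧ ρ ξ γ ≤ n} := by
      rintro ξ ⟨h1, h2⟩
      have hle : ξ ≤ γ := by
        rw [Ordinal.add_one_eq_succ] at h1; exact Order.lt_succ_iff.mp h1
      rcases eq_or_lt_of_le hle with rfl | hlt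
      · exact Set.mem_insert _ _
      · exact Set.mem_insert_of_mem _ ⟨hlt, by rwa [← rho_succ_aux hC hρ hle]⟩
    exact ((ih γ (lt_add_one γ) hγ n).insert γ).subset hsubset
  · obtain ⟨hsub, hcof, hinf, hfin⟩ := hC.2 β hβ hlim
    obtain ⟨T, hTsub, hTcard⟩ := hinf.exists_subset_card_eq (n + 1)
    have hTne : T.Nonempty := Finset.card_pos.mp (by omega)
    set m := T.max' hTne with hm
    have hmC : m ∈ C β := hTsub (T.max'_mem hTne)
    have hmβ : m < β := hsub hmC
    have hm1 : m + 1 < β := by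
      rw [Ordinal.add_one_eq_succ]; exact hlim.succ_lt hmβ
    set F := C β ∩ Set.Iio (m + 1) with hF
    have hFfin : F.Finite := hfin _ hm1
    have key : {ξ : Ordinal | ξ < β ∧ ρ ξ β ≤ n} ⊆
        F ∪ ⋃ c ∈ F, {ξ : Ordinal | ξ < c ∧ ρ ξ c ≤ n} := by
      rintro ξ ⟨hξβ, hξn⟩
      have hrec := hρ.2 ξ β hξβ
      have hξm : ξ ≤ m := by
        by_contra hcon
        push_neg at hcon
        have hT' : (T : Set Ordinal) ⊆ C β ∩ Set.Iio ξ :=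
          fun x hx => ⟨hTsub hx, lt_of_le_of_lt (T.le_max' x hx) hcon⟩
        have hcard : n + 1 ≤ (C β ∩ Set.Iio ξ).ncard := by
          have := Set.ncard_le_ncard hT' (hfin ξ hξβ)
          rwa [Set.ncard_coe_finset, hTcard] at this
        omega
      have hneξ : (C β \ Set.Iio ξ).Nonempty := ⟨m, hmC, not_lt.2 hξm⟩
      set c := sInf (C β \ Set.Iio ξ) with hc
      have hcmem : c ∈ C β \ Set.Iio ξ := csInf_mem hneξ
      have hξc : ξ ≤ c := not_lt.1 hcmem.2
      have hcm : c ≤ m := csInf_le' ⟨hmC, not_lt.2 hξm⟩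
      have hcF : c ∈ F := ⟨hcmem.1, lt_of_le_of_lt hcm (lt_add_one m)⟩
      rcases eq_or_lt_of_le hξc with heq | hlt
      · exact Or.inl (heq ▸ hcF)
      · refine Or.inr (Set.mem_biUnion hcF ⟨hlt, ?_⟩)
        have := le_max_right (C β ∩ Set.Iio ξ).ncard (ρ ξ c)
        omega
    refine (hFfin.union (hFfin.biUnion fun c hc => ?_)).subset key
    exact ih c (hsub hc.1) (lt_trans (hsub hc.1) hβ) n

/-- Lemma B: coherence of ρ₁. -/
lemma rho_coherent (hC : IsCSeq C) (hρ : Rho1Eqns C ρ) :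
    ∀ β : Ordinal, β < omega1 → ∀ α : Ordinal, α < β →
      {ξ : Ordinal | ξ < α ∧ ρ ξ α ≠ ρ ξ β}.Finite := by
  intro β
  induction β using Ordinal.induction with
  | h β ih =>
  intro hβ α hα
  rcases Ordinal.zero_or_succ_or_isSuccLimit β with rfl | ⟨γ, rfl⟩ | hlim
  · exact absurd hα (not_lt_zero (a := α))
  · rw [← Ordinal.add_one_eq_succ] at *
    have hαγ : α ≤ γ := by
      rw [Ordinal.add_one_eq_succ] at hα; exact Order.lt_succ_iff.mp hα
    have hsubset : {ξ : Ordinal | ξ < α ∧ ρ ξ α ≠ ρ ξ (γ + 1)} ⊆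
        {ξ : Ordinal | ξ < α ∧ ρ ξ α ≠ ρ ξ γ} := by
      rintro ξ ⟨h1, h2⟩
      exact ⟨h1, by rwa [← rho_succ_aux hC hρ (le_of_lt (lt_of_lt_of_le h1 hαγ))]⟩
    rcases eq_or_lt_of_le hαγ with rfl | hlt
    · refine Set.Finite.subset Set.finite_empty (hsubset.trans ?_)
      rintro ξ ⟨_, h2⟩; exact absurd rfl h2
    · exact (ih γ (lt_add_one γ) (lt_trans (lt_add_one γ) hβ) α hlt).subset hsubset
  · obtain ⟨hsub, hcof, hinf, hfin⟩ := hC.2 β hβ hlim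
    obtain ⟨m0, hm0C, hm0α⟩ := hcof α hα
    have hne : (C β \ Set.Iio α).Nonempty := ⟨m0, hm0C, not_lt.2 hm0α⟩
    set β' := sInf (C β \ Set.Iio α) with hβ'
    have hβ'mem : β' ∈ C β \ Set.Iio α := csInf_mem hne
    have hβ'C : β' ∈ C β := hβ'mem.1
    have hαβ' : α ≤ β' := not_lt.1 hβ'mem.2
    have hβ'β : β' < β := hsub hβ'C
    have hαω : α < omega1 := lt_trans hα hβ
    have hβ'ω : β' < omega1 := lt_trans hβ'β hβ
    set F := C β ∩ Set.Iio α with hF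
    have hFfin : F.Finite := hfin α hα
    set n := F.ncard with hn
    have key : {ξ : Ordinal | ξ < α ∧ ρ ξ α ≠ ρ ξ β} ⊆
        F ∪ ({ξ : Ordinal | ξ < α ∧ ρ ξ α ≤ n} ∪ ({ξ : Ordinal | ξ < α ∧ ρ ξ α ≠ ρ ξ β'} ∪
          ({ξ : Ordinal | ξ < β' ∧ ρ ξ β' ≤ n} ∪
          ⋃ c ∈ F, ({ξ : Ordinal | ξ < c ∧ ρ ξ c ≤ n} ∪
            {ξ : Ordinal | ξ < c ∧ ρ ξ c ≠ ρ ξ α})))) := by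
      rintro ξ ⟨hξα, hdiff⟩
      simp only [Set.mem_union, Set.mem_setOf_eq]
      have hξβ : ξ < β := lt_trans hξα hα
      have hneξ : (C β \ Set.Iio ξ).Nonempty :=
        ⟨m0, hm0C, not_lt.2 (le_trans (le_of_lt hξα) hm0α)⟩
      set c := sInf (C β \ Set.Iio ξ) with hc
      have hcmem : c ∈ C β \ Set.Iio ξ := csInf_mem hneξ
      have hξc : ξ ≤ c := not_lt.1 hcmem.2
      have hcβ' : c ≤ β' := csInf_le' ⟨hβ'C, not_lt.2 (le_trans (le_of_lt hξα) hαβ')⟩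
      have hrec := hρ.2 ξ β hξβ
      rw [← hc] at hrec
      have hkn : (C β ∩ Set.Iio ξ).ncard ≤ n :=
        Set.ncard_le_ncard (Set.inter_subset_inter_right _ (Set.Iio_subset_Iio hξα.le)) hFfin
      rcases eq_or_lt_of_le hξc with heq | hξc'
      · rcases lt_or_ge c α with hcα | hcα
        · refine Or.inl ?_
          rw [heq]; exact ⟨hcmem.1, hcα⟩
        · rw [← heq] at hcα; exact absurd hcα (not_le.2 hξα)
      rcases lt_trichotomy c α with hcα | hcα | hcα
      · -- ξ < c < α, c ∈ F
        have hcF : c ∈ F := ⟨hcmem.1, hcα⟩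
        by_cases hd : ρ ξ c = ρ ξ α
        · refine Or.inr (Or.inl ⟨hξα, ?_⟩)
          rw [hd] at hrec
          rcases le_or_gt (C β ∩ Set.Iio ξ).ncard (ρ ξ α) with h | h
          · rw [max_eq_right h] at hrec; exact absurd hrec.symm hdiff
          · omega
        · exact Or.inr (Or.inr (Or.inr (Or.inr
            (Set.mem_biUnion hcF (Set.mem_union_right _ ⟨hξc', hd⟩)))))
      · -- c = α
        refine Or.inr (Or.inl ⟨hξα, ?_⟩)
        rw [hcα] at hrec
        rcases le_or_gt (C β ∩ Set.Iio ξ).ncard (ρ ξ α) with h | h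
        · rw [max_eq_right h] at hrec; exact absurd hrec.symm hdiff
        · omega
      · -- α < c, so c = β'
        have hcβ'eq : c = β' := by
          refine le_antisymm hcβ' (csInf_le' ⟨hcmem.1, not_lt.2 hcα.le⟩)
        rw [hcβ'eq] at hrec
        by_cases hd : ρ ξ β' = ρ ξ β
        · exact Or.inr (Or.inr (Or.inl ⟨hξα, fun h => hdiff (h.trans hd)⟩))
        · refine Or.inr (Or.inr (Or.inr (Or.inl ⟨lt_of_lt_of_le hξα hαβ', ?_⟩)))
          rcases le_or_gt (C β ∩ Set.Iio ξ).ncard (ρ ξ β') with h | h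
          · rw [max_eq_right h] at hrec; exact absurd hrec.symm hd
          · omega
    have h2fin : {ξ : Ordinal | ξ < α ∧ ρ ξ α ≤ n}.Finite := rho_fib_finite hC hρ α hαω n
    have h3fin : {ξ : Ordinal | ξ < α ∧ ρ ξ α ≠ ρ ξ β'}.Finite := by
      rcases eq_or_lt_of_le hαβ' with heq | hlt
      · refine Set.Finite.subset Set.finite_empty ?_
        rintro ξ ⟨_, h⟩; rw [← heq] at h; exact absurd rfl h
      · exact ih β' hβ'β hβ'ω α hlt
    have h4fin : {ξ : Ordinal | ξ < β' ∧ ρ ξ β' ≤ n}.Finite := rho_fib_finite hC hρ β' hβ'ω n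
    have h5fin : (⋃ c ∈ F, ({ξ : Ordinal | ξ < c ∧ ρ ξ c ≤ n} ∪
        {ξ : Ordinal | ξ < c ∧ ρ ξ c ≠ ρ ξ α})).Finite := by
      refine hFfin.biUnion fun c hc => Set.Finite.union ?_ ?_
      · exact rho_fib_finite hC hρ c (lt_trans hc.2 hαω) n
      · exact ih α hα hαω c hc.2
    exact (hFfin.union (h2fin.union (h3fin.union (h4fin.union h5fin)))).subset key

end Aux

/-- `ρ₁` is coherent: for `α < β < ω₁` the set of `ξ < α` where the two vertical
sections disagree is finite. -/
theorem stmt15 (C : Ordinal → Set Ordinal) (hC : IsCSeq C)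
    (ρ : Ordinal → Ordinal → ℕ) (hρ : Rho1Eqns C ρ)
    (α β : Ordinal) (h1 : α < β) (h2 : β < omega1) :
    {ξ : Ordinal | ξ < α ∧ ρ ξ α ≠ ρ ξ β}.Finite := by
  exact rho_coherent hC hρ β h2 α h1
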